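/- Let n ≥ 2, let N = 2^n + 2, and let A be an n-element set of positive integers that is sumset-distinct modulo N and contains no element congruent to N/2 modulo N. Then A contains exactly one odd element. -/

import Mathlib

open Polynomial Finset

/-- An `n`-element set `A` of positive integers is *sumset-distinct modulo `N`*
if all subset sums (including the empty sum) are pairwise distinct modulo `N`. -/
def SumsetDistinctMod (N : ℕ) (A : Finset ℕ) : Prop :=
  ∀ B ⊆ A, ∀ C ⊆ A, (∑ x ∈ B, x) % N = (∑ x ∈ C, x) % N → B = C

set_option maxHeartbeats 1600000 in
theorem stmt15 (n : ℕ) (hn : 2 ≤ n) (N : ℕ) (hN : N = 2 ^ n + 2)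
    (A : Finset ℕ) (hpos : ∀ a ∈ A, 0 < a) (hcard : A.card = n)
    (hA : SumsetDistinctMod N A)
    (hhalf : ∀ a ∈ A, a % N ≠ N / 2) :
    ∃! a, a ∈ A ∧ Odd a := by
  classical
  -- basic arithmetic setup
  obtain ⟨m, hNm, hm1, hmodd⟩ : ∃ m, N = 2 * m ∧ 1 < m ∧ Odd m := by
    refine ⟨2 ^ (n - 1) + 1, ?_, ?_, ?_⟩
    · have h : 2 ^ n = 2 * 2 ^ (n - 1) := by
        rw [← pow_succ']
        congr 1
        omega
      omega
    · have h : 2 ^ 1 ≤ 2 ^ (n - 1) := Nat.pow_le_pow_right (by norm_num) (by omega)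
      simpa using by omega
    · obtain ⟨k, hk⟩ : 2 ∣ 2 ^ (n - 1) := dvd_pow_self 2 (by omega)
      exact ⟨k, by omega⟩
  have hN0 : 0 < N := by omega
  have hNhalf : N / 2 = m := by omega
  have h2n : 2 ^ n + 2 = N := hN.symm
  -- the residue map
  set f : Finset ℕ → ℕ := fun B => (∑ x ∈ B, x) % N with hf
  have hfinj : ∀ B ∈ A.powerset, ∀ C ∈ A.powerset, f B = f C → B = C := by
    intro B hB C hC h
    exact hA B (Finset.mem_powerset.mp hB) C (Finset.mem_powerset.mp hC) h
  set I : Finset ℕ := A.powerset.image f with hI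
  have hIsub : I ⊆ Finset.range N := by
    intro t ht
    rw [hI, Finset.mem_image] at ht
    obtain ⟨B, _, rfl⟩ := ht
    exact Finset.mem_range.mpr (Nat.mod_lt _ hN0)
  have hIcard : I.card = 2 ^ n := by
    rw [hI, Finset.card_image_of_injOn (fun x hx y hy h => hfinj x hx y hy h),
      Finset.card_powerset, hcard]
  have hsd : (Finset.range N \ I).card = 2 := by
    rw [Finset.card_sdiff_of_subset hIsub, Finset.card_range, hIcard]
    omega
  obtain ⟨u₀, v₀, hne₀, hset₀⟩ := Finset.card_eq_two.mp hsd
  -- the main argument, for an ordered pair of missing residues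
  have MAIN : ∀ u v : ℕ, u < v → Finset.range N \ I = {u, v} → ∃! a, a ∈ A ∧ Odd a := by
    intro u v huv hset
    have hneq : u ≠ v := huv.ne
    have humem : u ∈ Finset.range N \ I := by rw [hset]; simp
    have hvmem : v ∈ Finset.range N \ I := by rw [hset]; simp
    have hu : u < N := Finset.mem_range.mp (Finset.mem_sdiff.mp humem).1
    have hv : v < N := Finset.mem_range.mp (Finset.mem_sdiff.mp hvmem).1
    -- master identity
    have master : ∀ (R : Type) [CommRing R] (z : R), z ^ N = 1 →
        ∏ a ∈ A, (1 + z ^ a) = (∑ t ∈ Finset.range N, z ^ t) - z ^ u - z ^ v := by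
      intro R _ z hz
      have hpm : ∀ k : ℕ, z ^ k = z ^ (k % N) := by
        intro k
        conv_lhs => rw [← Nat.div_add_mod k N]
        rw [pow_add, pow_mul, hz, one_pow, one_mul]
      have h1 : ∏ a ∈ A, (1 + z ^ a) = ∑ B ∈ A.powerset, z ^ f B := by
        calc ∏ a ∈ A, (1 + z ^ a) = ∏ a ∈ A, (z ^ a + 1) := by
              refine Finset.prod_congr rfl fun a _ => add_comm _ _
          _ = ∑ B ∈ A.powerset, (∏ i ∈ B, z ^ i) * ∏ i ∈ A \ B, (1 : R) :=
              Finset.prod_add _ _ _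
          _ = ∑ B ∈ A.powerset, z ^ (∑ i ∈ B, i) := by
              refine Finset.sum_congr rfl fun B _ => ?_
              rw [Finset.prod_const_one, mul_one, Finset.prod_pow_eq_pow_sum]
          _ = ∑ B ∈ A.powerset, z ^ f B := by
              refine Finset.sum_congr rfl fun B _ => ?_
              rw [hf]
              exact hpm _
      have h2 : ∑ B ∈ A.powerset, z ^ f B = ∑ t ∈ I, z ^ t := by
        rw [hI, Finset.sum_image hfinj]
      have h3 : (∑ t ∈ Finset.range N \ I, z ^ t) + ∑ t ∈ I, z ^ t
          = ∑ t ∈ Finset.range N, z ^ t := Finset.sum_sdiff hIsub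
      rw [hset, Finset.sum_pair hneq] at h3
      rw [h1, h2]
      linear_combination h3
    -- the key polynomial divisibility
    have KEY2 : ((X : ℤ[X]) ^ m - 1) ∣
        (∏ x ∈ A, (1 + (-X : ℤ[X]) ^ x)) + (-X : ℤ[X]) ^ u + (-X : ℤ[X]) ^ v := by
      set Q : Ideal ℤ[X] := Ideal.span {(X : ℤ[X]) ^ m - 1} with hQ
      set mk := Ideal.Quotient.mk Q with hmk
      have hmem : (X : ℤ[X]) ^ m - 1 ∈ Q := Ideal.subset_span rfl
      have hXm : mk ((X : ℤ[X]) ^ m) = 1 := by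
        rw [show (1 : ℤ[X] ⧸ Q) = mk 1 from rfl]
        rw [Ideal.Quotient.mk_eq_mk_iff_sub_mem]
        simpa using hmem
      have hz : (mk (-X)) ^ N = 1 := by
        have : (mk (-X)) ^ N = mk ((-X) ^ N) := by rw [map_pow]
        rw [this, Even.neg_pow (n := N) (⟨m, by omega⟩ : Even N) (X : ℤ[X]), hNm, mul_comm 2 m, pow_mul,
          map_pow, hXm, one_pow]
      have hid := master (ℤ[X] ⧸ Q) (mk (-X)) hz
      have hq0 : mk ((∏ x ∈ A, (1 + (-X : ℤ[X]) ^ x)) - ((∑ t ∈ Finset.range N, (-X : ℤ[X]) ^ t)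
          - (-X : ℤ[X]) ^ u - (-X : ℤ[X]) ^ v)) = 0 := by
        rw [map_sub, sub_eq_zero, map_prod, map_sub, map_sub, map_sum]
        simp only [map_add, map_one, map_pow]
        exact hid
      have hdvd1 : ((X : ℤ[X]) ^ m - 1) ∣ ((∏ x ∈ A, (1 + (-X : ℤ[X]) ^ x))
          - ((∑ t ∈ Finset.range N, (-X : ℤ[X]) ^ t)
            - (-X : ℤ[X]) ^ u - (-X : ℤ[X]) ^ v)) := by
        rw [← Ideal.mem_span_singleton, ← hQ]
        exact (Ideal.Quotient.eq_zero_iff_mem).mp hq0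
      have hdvd2 : ((X : ℤ[X]) ^ m - 1) ∣ ∑ t ∈ Finset.range N, (-X : ℤ[X]) ^ t := by
        have hsplit : ∑ t ∈ Finset.range N, (-X : ℤ[X]) ^ t
            = (∑ t ∈ Finset.range m, (-X : ℤ[X]) ^ t) * (1 + (-X) ^ m) := by
          rw [hNm, two_mul, Finset.sum_range_add]
          rw [mul_add, mul_one]
          congr 1
          rw [Finset.sum_mul]
          refine Finset.sum_congr rfl fun i _ => ?_
          rw [add_comm m i, pow_add]
        rw [hsplit]
        have : (1 : ℤ[X]) + (-X) ^ m = -((X : ℤ[X]) ^ m - 1) := by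
          rw [Odd.neg_pow hmodd]
          ring
        rw [this]
        exact ⟨-(∑ t ∈ Finset.range m, (-X : ℤ[X]) ^ t), by ring⟩
      have := dvd_add hdvd1 hdvd2
      have heq : (∏ x ∈ A, (1 + (-X : ℤ[X]) ^ x)) + (-X : ℤ[X]) ^ u + (-X : ℤ[X]) ^ v
          = ((∏ x ∈ A, (1 + (-X : ℤ[X]) ^ x))
            - ((∑ t ∈ Finset.range N, (-X : ℤ[X]) ^ t)
              - (-X : ℤ[X]) ^ u - (-X : ℤ[X]) ^ v))
            + ∑ t ∈ Finset.range N, (-X : ℤ[X]) ^ t := by ring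
      rw [heq]
      exact this
    -- evaluation at 1
    have heval1 : (∏ x ∈ A, (1 + (-1 : ℤ) ^ x)) + (-1 : ℤ) ^ u + (-1 : ℤ) ^ v = 0 := by
      obtain ⟨g, hg⟩ := KEY2
      have := congrArg (Polynomial.eval (1 : ℤ)) hg
      simpa [Polynomial.eval_prod] using this
    -- existence of an odd element
    have hex : ∃ a ∈ A, Odd a := by
      by_contra h
      push_neg at h
      have hall : ∀ x ∈ A, (1 + (-1 : ℤ) ^ x) = 2 := by
        intro x hx
        have : Even x := Nat.not_odd_iff_even.mp (h x hx)
        rw [this.neg_one_pow]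
        norm_num
      have hprod : (∏ x ∈ A, (1 + (-1 : ℤ) ^ x)) = 2 ^ n := by
        rw [Finset.prod_congr rfl hall, Finset.prod_const, hcard]
      have h4 : (4 : ℤ) ≤ 2 ^ n := by
        calc (4 : ℤ) = 2 ^ 2 := by norm_num
          _ ≤ 2 ^ n := pow_le_pow_right₀ (by norm_num) hn
      rcases neg_one_pow_eq_or ℤ u with h1 | h1 <;>
        rcases neg_one_pow_eq_or ℤ v with h2 | h2 <;>
          rw [hprod, h1, h2] at heval1 <;> linarith
    -- uniqueness : no two distinct odd elements
    have huniq : ∀ a b : ℕ, a ∈ A → b ∈ A → Odd a → Odd b → a ≠ b → False := by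
      intro a b haA hbA haodd hbodd hab
      have hbe : b ∈ A.erase a := Finset.mem_erase.mpr ⟨Ne.symm hab, hbA⟩
      set A' := (A.erase a).erase b with hA'
      have hsplit : ∏ x ∈ A, (1 + (-X : ℤ[X]) ^ x)
          = (1 + (-X : ℤ[X]) ^ a) * ((1 + (-X : ℤ[X]) ^ b)
            * ∏ x ∈ A', (1 + (-X : ℤ[X]) ^ x)) := by
        rw [hA', Finset.mul_prod_erase (A.erase a) (fun x => 1 + (-X : ℤ[X]) ^ x) hbe,
          Finset.mul_prod_erase A (fun x => 1 + (-X : ℤ[X]) ^ x) haA]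
      set qa : ℤ[X] := ∑ i ∈ Finset.range a, X ^ i with hqa
      set qb : ℤ[X] := ∑ i ∈ Finset.range b, X ^ i with hqb
      set Pr : ℤ[X] := ∏ x ∈ A', (1 + (-X : ℤ[X]) ^ x) with hPr
      have hfa : (1 + (-X : ℤ[X]) ^ a) = -(qa * (X - 1)) := by
        rw [Odd.neg_pow haodd, hqa, geom_sum_mul]; ring
      have hfb : (1 + (-X : ℤ[X]) ^ b) = -(qb * (X - 1)) := by
        rw [Odd.neg_pow hbodd, hqb, geom_sum_mul]; ring
      set G : ℤ[X] := qa * qb * Pr with hG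
      have hGsplit : ∏ x ∈ A, (1 + (-X : ℤ[X]) ^ x) = (X - 1) ^ 2 * G := by
        rw [hsplit, hfa, hfb, hG]; ring
      have hprod0 : (∏ x ∈ A, (1 + (-1 : ℤ) ^ x)) = 0 :=
        Finset.prod_eq_zero haA (by rw [haodd.neg_one_pow]; ring)
      have hεv : (-1 : ℤ) ^ v = -(-1 : ℤ) ^ u := by
        have h := heval1
        rw [hprod0] at h
        linarith
      set ε : ℤ := (-1) ^ u with hε
      have hCsign : ((-X : ℤ[X]) ^ u + (-X : ℤ[X]) ^ v) = C ε * (X ^ u - X ^ v) := by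
        have h1 : (-X : ℤ[X]) ^ u = C ((-1 : ℤ) ^ u) * X ^ u := by
          rw [neg_pow, map_pow, map_neg, map_one]
        have h2 : (-X : ℤ[X]) ^ v = C ((-1 : ℤ) ^ v) * X ^ v := by
          rw [neg_pow, map_pow, map_neg, map_one]
        rw [h1, h2, hεv, hε, map_neg]
        ring
      obtain ⟨g, hg⟩ := KEY2
      have E1 : (X - 1) ^ 2 * G + C ε * (X ^ u - X ^ v) = ((X : ℤ[X]) ^ m - 1) * g := by
        rw [← hCsign, ← hGsplit]
        linear_combination hg
      -- derivative at 1 forces v = u + m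
      have hder : ε * ((u : ℤ) - (v : ℤ)) = (m : ℤ) * g.eval 1 := by
        have h := congrArg (fun p : ℤ[X] => (Polynomial.derivative p).eval 1) E1
        simp only [derivative_add, derivative_mul, derivative_pow, derivative_sub,
          derivative_one, derivative_X, derivative_C, derivative_X_pow, eval_add, eval_mul,
          eval_pow, eval_sub, eval_one, eval_X, eval_C, eval_natCast, eval_intCast,
          one_pow, mul_one, one_mul, sub_self, zero_mul, mul_zero, add_zero, zero_add,
          sub_zero] at h
        push_cast at h ⊢
        linarith [h]
      have hε2 : ε * ε = 1 := by
        rw [hε, ← pow_add]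
        exact Even.neg_one_pow ⟨u, rfl⟩
      have hvu : v = u + m := by
        obtain ⟨t, hdvd⟩ : ∃ t : ℤ, ((v : ℤ) - u) = m * t :=
          ⟨-(ε * g.eval 1),
            by linear_combination (-ε) * hder + ((u : ℤ) - (v : ℤ)) * hε2⟩
        have hm2 : (2 : ℤ) ≤ m := by exact_mod_cast hm1
        have hub : ((v : ℤ) - u) < 2 * m := by
          have : (v : ℤ) < 2 * m := by exact_mod_cast (hNm ▸ hv)
          have h0 : (0 : ℤ) ≤ u := Int.ofNat_nonneg u
          linarith
        have hlb : (0 : ℤ) < (v : ℤ) - u := by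
          have : (u : ℤ) < (v : ℤ) := by exact_mod_cast huv
          linarith
        rw [hdvd] at hlb hub
        have ht1 : t = 1 := by
          by_contra hne1
          rcases lt_or_gt_of_ne hne1 with h | h
          · have ht0 : t ≤ 0 := by linarith
            nlinarith
          · have ht2 : (2 : ℤ) ≤ t := by linarith
            nlinarith
        rw [ht1, mul_one] at hdvd
        have : (v : ℤ) = u + m := by linarith
        exact_mod_cast this
      have hXv : (X : ℤ[X]) ^ v = X ^ u * X ^ m := by rw [hvu, pow_add]
      have E2 : (X - 1) ^ 2 * G = ((X : ℤ[X]) ^ m - 1) * (g + C ε * X ^ u) := by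
        linear_combination E1 + C ε * hXv
      set σp : ℤ[X] := ∑ i ∈ Finset.range m, X ^ i with hσdef
      have hσ : σp * (X - 1) = (X : ℤ[X]) ^ m - 1 := geom_sum_mul X m
      have hX1 : (X - 1 : ℤ[X]) ≠ 0 := by
        simpa using Polynomial.X_sub_C_ne_zero (1 : ℤ)
      have E3 : (X - 1) * G = σp * (g + C ε * X ^ u) := by
        apply mul_right_cancel₀ hX1
        linear_combination E2 - (g + C ε * X ^ u) * hσ
      have hσ1 : σp.eval 1 = (m : ℤ) := by
        rw [hσdef]
        simp [Polynomial.eval_finset_sum]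
      have hg21 : (g + C ε * X ^ u).eval 1 = 0 := by
        have h := congrArg (Polynomial.eval (1 : ℤ)) E3
        simp only [eval_mul, eval_sub, eval_X, eval_one, sub_self, zero_mul] at h
        rw [hσ1] at h
        have hm0' : (m : ℤ) ≠ 0 := by
          have : (0 : ℤ) < m := by exact_mod_cast Nat.lt_of_lt_of_le Nat.zero_lt_one hm1.le
          linarith
        rcases mul_eq_zero.mp h.symm with h' | h'
        · exact absurd h' hm0'
        · exact h'
      obtain ⟨h, hh⟩ : (X - 1 : ℤ[X]) ∣ (g + C ε * X ^ u) := by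
        have hd : (X - C (1 : ℤ)) ∣ (g + C ε * X ^ u) := Polynomial.dvd_iff_isRoot.mpr hg21
        simpa using hd
      have E4 : G = σp * h := by
        apply mul_right_cancel₀ hX1
        linear_combination E3 + σp * hh
      -- evaluate at a primitive m-th root of unity
      have hm0 : m ≠ 0 := by omega
      obtain ⟨ζ, hζ⟩ : ∃ ζ : ℂ, IsPrimitiveRoot ζ m := ⟨_, Complex.isPrimitiveRoot_exp m hm0⟩
      have hζm : ζ ^ m = 1 := hζ.pow_eq_one
      have hζ1 : ζ ≠ 1 := hζ.ne_one hm1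
      have hσζ : (Polynomial.aeval ζ) σp = 0 := by
        have hgs : (∑ i ∈ Finset.range m, ζ ^ i) * (ζ - 1) = ζ ^ m - 1 := geom_sum_mul ζ m
        have h0 : (∑ i ∈ Finset.range m, ζ ^ i) * (ζ - 1) = 0 := by
          rw [hgs, hζm, sub_self]
        have hsum : (∑ i ∈ Finset.range m, ζ ^ i) = 0 := by
          rcases mul_eq_zero.mp h0 with h' | h'
          · exact h'
          · exact absurd (sub_eq_zero.mp h') hζ1
        rw [hσdef]
        simpa using hsum
      have hGζ : (Polynomial.aeval ζ) G = 0 := by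
        rw [E4, map_mul, hσζ, zero_mul]
      have hev : (Polynomial.aeval ζ) qa
          * ((Polynomial.aeval ζ) qb * (Polynomial.aeval ζ) Pr) = 0 := by
        rw [← map_mul, ← map_mul, show qa * (qb * Pr) = qa * qb * Pr from (mul_assoc qa qb Pr).symm,
          ← hG]
        exact hGζ
      -- the final contradiction helper
      have final : ∀ e : ℕ, e ∈ A → Odd e → m ∣ e → False := by
        intro e heA heodd hme
        obtain ⟨t, ht⟩ := hme
        have htodd : Odd t := by
          rcases Nat.even_or_odd t with he | ho
          · exact absurd (ht ▸ he.mul_left m) (Nat.not_even_iff_odd.mpr heodd)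
          · exact ho
        obtain ⟨s, hs⟩ := htodd
        have hmod : e % N = m := by
          rw [hNm, ht, hs, show m * (2 * s + 1) = m + s * (2 * m) from by ring,
            Nat.add_mul_mod_self_right]
          exact Nat.mod_eq_of_lt (by omega)
        exact hhalf e heA (by rw [hmod, hNhalf])
      -- case analysis on the vanishing factor
      have hgeom_zero : ∀ c : ℕ, (Polynomial.aeval ζ) (∑ i ∈ Finset.range c, (X : ℤ[X]) ^ i) = 0
          → m ∣ c := by
        intro c hc
        have hc' : (∑ i ∈ Finset.range c, ζ ^ i) = 0 := by
          rw [← hc]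
          simp
        have hgs : (∑ i ∈ Finset.range c, ζ ^ i) * (ζ - 1) = ζ ^ c - 1 := geom_sum_mul ζ c
        rw [hc', zero_mul] at hgs
        exact (hζ.pow_eq_one_iff_dvd c).mp (by linear_combination -hgs)
      rcases mul_eq_zero.mp hev with h1 | h'
      · exact final a haA haodd (hgeom_zero a (by rw [← hqa]; exact h1))
      rcases mul_eq_zero.mp h' with h1 | h'
      · exact final b hbA hbodd (hgeom_zero b (by rw [← hqb]; exact h1))
      · rw [hPr, map_prod] at h'
        have h'' : ∏ x ∈ A', (1 + (-ζ) ^ x) = 0 := by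
          rw [← h']
          refine Finset.prod_congr rfl fun x _ => ?_
          simp
        obtain ⟨x, hxA', hx0⟩ := Finset.prod_eq_zero_iff.mp h''
        have hxneg : (-ζ) ^ x = -1 := by linear_combination hx0
        have h2x : ζ ^ (2 * x) = 1 := by
          calc ζ ^ (2 * x) = (ζ ^ 2) ^ x := by rw [pow_mul]
            _ = ((-ζ) ^ 2) ^ x := by rw [neg_sq]
            _ = ((-ζ) ^ x) ^ 2 := by rw [← pow_mul, ← pow_mul, mul_comm]
            _ = 1 := by rw [hxneg]; norm_num
        have hmx : m ∣ x := by
          have hmcop : Nat.Coprime m 2 := Nat.Coprime.symm (by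
            simpa [Nat.coprime_two_left] using hmodd)
          exact hmcop.dvd_of_dvd_mul_left ((hζ.pow_eq_one_iff_dvd (2 * x)).mp h2x)
        have hzx : ζ ^ x = 1 := (hζ.pow_eq_one_iff_dvd x).mpr hmx
        have hxodd : Odd x := by
          have hneg1 : (-1 : ℂ) ^ x = -1 := by
            have : (-ζ) ^ x = (-1 : ℂ) ^ x * ζ ^ x := neg_pow ζ x ▸ by rw [neg_pow]
            rw [this, hzx, mul_one] at hxneg
            exact hxneg
          by_contra hxe
          rw [Nat.not_odd_iff_even] at hxe
          rw [hxe.neg_one_pow] at hneg1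
          norm_num at hneg1
        have hxA : x ∈ A := Finset.mem_of_mem_erase (Finset.mem_of_mem_erase (hA' ▸ hxA'))
        exact final x hxA hxodd hmx
    obtain ⟨a, haA, haodd⟩ := hex
    refine ⟨a, ⟨haA, haodd⟩, ?_⟩
    rintro b ⟨hbA, hbodd⟩
    by_contra hba
    exact huniq b a hbA haA hbodd haodd hba
  rcases Nat.lt_or_ge u₀ v₀ with h | h
  · exact MAIN u₀ v₀ h hset₀
  · have h' : v₀ < u₀ := lt_of_le_of_ne h (Ne.symm hne₀)
    exact MAIN v₀ u₀ h' (by rw [hset₀, Finset.pair_comm])
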